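/- For the Chebyshev polynomials T_j of the first kind and α > 0, define T̂^α_{L,j}(x) = (1/Γ(α)) ∫_{-1}^x (x−s)^{α−1} T_j(s) ds. Then for all j ≥ 2, T̂^α_{L,j+1}(x) = (2(j+1)x/(j+1+α)) T̂^α_{L,j}(x) − ((j+1)(j−1−α)/((j+1+α)(j−1))) T̂^α_{L,j−1}(x) + 2(−1)^j α (x+1)^α / (Γ(α+1)(j+1+α)(j−1)). -/

import Mathlib

open MeasureTheory intervalIntegral

noncomputable def chebT : ℕ → ℝ → ℝ
  | 0 => fun _ => 1
  | 1 => fun x => x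
  | (j + 2) => fun x => 2 * x * chebT (j + 1) x - chebT j x

noncomputable def chebU : ℕ → ℝ → ℝ
  | 0 => fun _ => 1
  | 1 => fun x => 2 * x
  | (j + 2) => fun x => 2 * x * chebU (j + 1) x - chebU j x

lemma chebT_eq_chebU : ∀ (k : ℕ) (x : ℝ), chebT (k+1) x = chebU (k+1) x - x * chebU k x := by
  intro k
  induction k using Nat.twoStepInduction with
  | zero => intro x; simp [chebT, chebU]; ring
  | one => intro x; simp [chebT, chebU]; ring
  | more n ih1 ih2 =>
    intro x
    have e1 := ih1 x
    have e2 := ih2 x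
    simp only [chebT, chebU] at *
    linear_combination 2*x*e2 - e1

lemma two_chebT (k : ℕ) (x : ℝ) : 2 * chebT (k+2) x = chebU (k+2) x - chebU k x := by
  have h1 := chebT_eq_chebU (k+1) x
  have h2 : chebU (k+2) x = 2 * x * chebU (k+1) x - chebU k x := rfl
  linarith [h1, h2]

noncomputable def dT : ℕ → ℝ → ℝ
  | 0 => fun _ => 0
  | (k+1) => fun x => ((k : ℝ) + 1) * chebU k x

lemma hasDerivAt_chebT : ∀ (k : ℕ) (x : ℝ), HasDerivAt (chebT k) (dT k x) x := by
  intro k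
  induction k using Nat.twoStepInduction with
  | zero => intro x; simpa [chebT, dT] using hasDerivAt_const x (1:ℝ)
  | one => intro x; simpa [chebT, dT, chebU] using hasDerivAt_id' x
  | more n ih1 ih2 =>
    intro x
    have h : HasDerivAt (fun y => 2 * y * chebT (n+1) y - chebT n y)
        ((2 * 1) * chebT (n+1) x + (2 * x) * dT (n+1) x - dT n x) x :=
      (((hasDerivAt_id x).const_mul 2).mul (ih2 x)).sub (ih1 x)
    have hval : (2 * 1) * chebT (n+1) x + (2 * x) * dT (n+1) x - dT n x = dT (n+2) x := by
      cases n with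
      | zero => simp [chebT, chebU, dT]; ring
      | succ m =>
        have h2x : 2 * x * chebU (m+1) x = chebU (m+2) x + chebU m x := by
          have : chebU (m+2) x = 2 * x * chebU (m+1) x - chebU m x := rfl
          linarith
        have ht := two_chebT m x
        simp only [dT]
        push_cast
        linear_combination ht + ((m : ℝ) + 2) * h2x
    exact hval ▸ h

lemma continuous_chebT (k : ℕ) : Continuous (chebT k) :=
  continuous_iff_continuousAt.2 fun x => (hasDerivAt_chebT k x).continuousAt

lemma chebT_neg_one : ∀ k : ℕ, chebT k (-1) = (-1) ^ k := by
  intro k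
  induction k using Nat.twoStepInduction with
  | zero => simp [chebT]
  | one => simp [chebT]
  | more n ih1 ih2 =>
    show 2 * (-1) * chebT (n+1) (-1) - chebT n (-1) = (-1)^(n+2)
    rw [ih1, ih2]
    ring

lemma rpow_integrable (α x : ℝ) (hα : 0 < α) :
    IntervalIntegrable (fun s => (x - s) ^ (α - 1)) volume (-1) x := by
  have h0 : IntervalIntegrable (fun t : ℝ => t ^ (α - 1)) volume (x + 1) 0 :=
    intervalIntegrable_rpow' (by linarith)
  simpa using h0.comp_sub_left x

lemma continuous_rpow_sub (α x : ℝ) (hα : 0 < α) :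
    Continuous fun s : ℝ => (x - s) ^ α := by
  apply continuous_iff_continuousAt.2
  intro s
  exact (Real.continuousAt_rpow_const _ _ (Or.inr hα.le)).comp
    ((continuous_const.sub continuous_id).continuousAt)

lemma ibp_frac (α x : ℝ) (hα : 0 < α) (hx : (-1 : ℝ) < x) (φ dφ : ℝ → ℝ)
    (hd : ∀ s, HasDerivAt φ (dφ s) s) (hc : Continuous dφ) (hφ : Continuous φ) :
    ∫ s in (-1 : ℝ)..x, (x - s) ^ α * dφ s
      = -((x + 1) ^ α * φ (-1)) + α * ∫ s in (-1 : ℝ)..x, (x - s) ^ (α - 1) * φ s := by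
  have hint1 := rpow_integrable α x hα
  have hint2 : IntervalIntegrable (fun s => (x - s) ^ (α - 1) * φ s) volume (-1) x :=
    hint1.mul_continuousOn hφ.continuousOn
  have hint3 : IntervalIntegrable (fun s => (x - s) ^ α * dφ s) volume (-1) x :=
    ((continuous_rpow_sub α x hα).mul hc).intervalIntegrable _ _
  have key : ∀ s ∈ Set.Ioo (-1 : ℝ) x, HasDerivAt (fun s => (x - s) ^ α * φ s)
      ((-α) * ((x - s) ^ (α - 1) * φ s) + (x - s) ^ α * dφ s) s := by
    intro s hs
    have hxs : (0 : ℝ) < x - s := by linarith [hs.2]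
    have hin : HasDerivAt (fun y : ℝ => x - y) (-1) s := by
      simpa using (hasDerivAt_id s).const_sub x
    have h1 : HasDerivAt (fun s : ℝ => (x - s) ^ α) (α * (x - s) ^ (α - 1) * (-1)) s :=
      (Real.hasDerivAt_rpow_const (Or.inl hxs.ne')).comp s hin
    have h : HasDerivAt (fun s => (x - s) ^ α * φ s) _ s := h1.mul (hd s)
    convert h using 1
    ring
  have hF' : IntervalIntegrable
      (fun s => (-α) * ((x - s) ^ (α - 1) * φ s) + (x - s) ^ α * dφ s) volume (-1) x :=
    (hint2.const_mul (-α)).add hint3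
  have hFTC := intervalIntegral.integral_eq_sub_of_hasDerivAt_of_le hx.le
    (((continuous_rpow_sub α x hα).mul hφ).continuousOn) key hF'
  rw [intervalIntegral.integral_add (hint2.const_mul (-α)) hint3,
    intervalIntegral.integral_const_mul] at hFTC
  have h0 : (x - x) ^ α = 0 := by
    rw [sub_self, Real.zero_rpow hα.ne']
  have h1 : x - (-1) = x + 1 := by ring
  simp only [Pi.mul_apply] at hFTC
  rw [h0, h1] at hFTC
  linarith [hFTC]

/-- Recurrence for the left fractional integrals of the Chebyshev polynomials, `j ≥ 2`. -/
theorem chebyshev_left_frac_integral_rec (α : ℝ) (hα : 0 < α) (j : ℕ) (hj : 2 ≤ j)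
    (x : ℝ) (hx : x ∈ Set.Ioc (-1 : ℝ) 1) :
    (1 / Real.Gamma α) * ∫ s in (-1 : ℝ)..x, (x - s) ^ (α - 1) * chebT (j + 1) s
      = (2 * ((j : ℝ) + 1) * x / ((j : ℝ) + 1 + α)) *
          ((1 / Real.Gamma α) * ∫ s in (-1 : ℝ)..x, (x - s) ^ (α - 1) * chebT j s)
        - (((j : ℝ) + 1) * ((j : ℝ) - 1 - α) / (((j : ℝ) + 1 + α) * ((j : ℝ) - 1))) *
          ((1 / Real.Gamma α) * ∫ s in (-1 : ℝ)..x, (x - s) ^ (α - 1) * chebT (j - 1) s)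
        + 2 * (-1 : ℝ) ^ j * α * (x + 1) ^ α /
            (Real.Gamma (α + 1) * ((j : ℝ) + 1 + α) * ((j : ℝ) - 1)) := by
  obtain ⟨k, rfl⟩ : ∃ k, j = k + 2 := ⟨j - 2, by omega⟩
  have hx1 : (-1 : ℝ) < x := hx.1
  have hint1 := rpow_integrable α x hα
  have hintT : ∀ m : ℕ, IntervalIntegrable (fun s => (x - s) ^ (α - 1) * chebT m s) volume (-1) x :=
    fun m => hint1.mul_continuousOn (continuous_chebT m).continuousOn
  have hG : IntervalIntegrable (fun s => (x - s) ^ α * chebT (k + 2) s) volume (-1) x :=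
    ((continuous_rpow_sub α x hα).mul (continuous_chebT (k + 2))).intervalIntegrable _ _
  -- Step 1: split using the recurrence
  have hsplit : (∫ s in (-1 : ℝ)..x, (x - s) ^ (α - 1) * chebT (k + 3) s)
      = 2 * x * (∫ s in (-1 : ℝ)..x, (x - s) ^ (α - 1) * chebT (k + 2) s)
        - 2 * (∫ s in (-1 : ℝ)..x, (x - s) ^ α * chebT (k + 2) s)
        - ∫ s in (-1 : ℝ)..x, (x - s) ^ (α - 1) * chebT (k + 1) s := by
    have h1 : (∫ s in (-1 : ℝ)..x, (x - s) ^ (α - 1) * chebT (k + 3) s)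
        = ∫ s in (-1 : ℝ)..x, (2 * x * ((x - s) ^ (α - 1) * chebT (k + 2) s)
            - 2 * ((x - s) ^ α * chebT (k + 2) s)
            - (x - s) ^ (α - 1) * chebT (k + 1) s) := by
      apply intervalIntegral.integral_congr
      intro s hs
      rw [Set.uIcc_of_le (by linarith : (-1 : ℝ) ≤ x)] at hs
      have hs' : s ≤ x := hs.2
      have hpow : (x - s) ^ (α - 1) * (x - s) = (x - s) ^ α := by
        rcases eq_or_lt_of_le hs' with h | h
        · rw [h]; simp [Real.zero_rpow hα.ne']
        · have hpos : (0 : ℝ) < x - s := by linarith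
          rw [← Real.rpow_add_one hpos.ne', sub_add_cancel]
      have hT : chebT (k + 3) s = 2 * s * chebT (k + 2) s - chebT (k + 1) s := rfl
      simp only [hT]
      linear_combination (-2 * chebT (k + 2) s) * hpow
    rw [h1, intervalIntegral.integral_sub
        (((hintT (k + 2)).const_mul (2 * x)).sub (hG.const_mul 2)) (hintT (k + 1)),
      intervalIntegral.integral_sub ((hintT (k + 2)).const_mul (2 * x)) (hG.const_mul 2),
      intervalIntegral.integral_const_mul, intervalIntegral.integral_const_mul]
  -- Step 2: integration by parts for the middle integral
  have hder : ∀ s : ℝ, HasDerivAt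
      (fun s => chebT (k + 3) s / (2 * ((k : ℝ) + 3)) - chebT (k + 1) s / (2 * ((k : ℝ) + 1)))
      (chebT (k + 2) s) s := by
    intro s
    have h : HasDerivAt
        (fun s => chebT (k + 3) s / (2 * ((k : ℝ) + 3)) - chebT (k + 1) s / (2 * ((k : ℝ) + 1))) _ s :=
      ((hasDerivAt_chebT (k + 3) s).div_const (2 * ((k : ℝ) + 3))).sub
      ((hasDerivAt_chebT (k + 1) s).div_const (2 * ((k : ℝ) + 1)))
    convert h using 1
    simp only [dT]
    push_cast
    have h3 : ((k : ℝ) + 3) ≠ 0 := by positivity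
    have hk1 : ((k : ℝ) + 1) ≠ 0 := by positivity
    field_simp
    linear_combination ((k : ℝ) + 3) * two_chebT k s
  have hibp := ibp_frac α x hα hx1 _ _ hder (continuous_chebT (k + 2))
    (((continuous_chebT (k + 3)).div_const _).sub ((continuous_chebT (k + 1)).div_const _))
  -- Step 3: rewrite the φ-integral as a combination of F's
  have hphi : (∫ s in (-1 : ℝ)..x, (x - s) ^ (α - 1) *
        (chebT (k + 3) s / (2 * ((k : ℝ) + 3)) - chebT (k + 1) s / (2 * ((k : ℝ) + 1))))
      = (1 / (2 * ((k : ℝ) + 3))) * (∫ s in (-1 : ℝ)..x, (x - s) ^ (α - 1) * chebT (k + 3) s)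
        - (1 / (2 * ((k : ℝ) + 1))) * ∫ s in (-1 : ℝ)..x, (x - s) ^ (α - 1) * chebT (k + 1) s := by
    rw [← intervalIntegral.integral_const_mul, ← intervalIntegral.integral_const_mul,
      ← intervalIntegral.integral_sub ((hintT (k + 3)).const_mul _) ((hintT (k + 1)).const_mul _)]
    apply intervalIntegral.integral_congr
    intro s _
    ring
  rw [hphi] at hibp
  have hphi1 : chebT (k + 3) (-1) / (2 * ((k : ℝ) + 3)) - chebT (k + 1) (-1) / (2 * ((k : ℝ) + 1))
      = (-1 : ℝ) ^ (k + 3) / (2 * ((k : ℝ) + 3)) - (-1 : ℝ) ^ (k + 1) / (2 * ((k : ℝ) + 1)) := by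
    rw [chebT_neg_one, chebT_neg_one]
  rw [hphi1] at hibp
  have hp3 : (-1 : ℝ) ^ (k + 3) = -(-1 : ℝ) ^ k := by rw [pow_add]; ring
  have hp1 : (-1 : ℝ) ^ (k + 1) = -(-1 : ℝ) ^ k := by rw [pow_add]; ring
  rw [hp3, hp1] at hibp
  -- Step 4: combine into the linear equation
  set F1 := ∫ s in (-1 : ℝ)..x, (x - s) ^ (α - 1) * chebT (k + 1) s with hF1
  set F2 := ∫ s in (-1 : ℝ)..x, (x - s) ^ (α - 1) * chebT (k + 2) s with hF2
  set F3 := ∫ s in (-1 : ℝ)..x, (x - s) ^ (α - 1) * chebT (k + 3) s with hF3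
  set G := ∫ s in (-1 : ℝ)..x, (x - s) ^ α * chebT (k + 2) s with hGdef
  have h3 : ((k : ℝ) + 3) ≠ 0 := by positivity
  have hk1 : ((k : ℝ) + 1) ≠ 0 := by positivity
  have hC : F3 * (((k : ℝ) + 3) + α) * ((k : ℝ) + 1)
      = 2 * x * ((k : ℝ) + 3) * ((k : ℝ) + 1) * F2
        - ((k : ℝ) + 3) * (((k : ℝ) + 1) - α) * F1
        + 2 * (-1 : ℝ) ^ k * (x + 1) ^ α := by
    have e1 : F3 = 2 * x * F2 - 2 * G - F1 := hsplit
    have e2 : 2 * ((k : ℝ) + 3) * ((k : ℝ) + 1) * G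
        = -(2 * (-1 : ℝ) ^ k * (x + 1) ^ α)
          + α * (((k : ℝ) + 1) * F3 - ((k : ℝ) + 3) * F1) := by
      rw [hibp]
      field_simp
      ring
    linear_combination (((k : ℝ) + 3) * ((k : ℝ) + 1)) * e1 - e2
  -- Step 5: final algebra
  have hg : Real.Gamma α ≠ 0 := (Real.Gamma_pos_of_pos hα).ne'
  have hαne : α ≠ 0 := hα.ne'
  have hd1 : ((k : ℝ) + 3) + α ≠ 0 := by positivity
  have hC0 : F3 = (2 * x * ((k : ℝ) + 3) * ((k : ℝ) + 1) * F2
      - ((k : ℝ) + 3) * (((k : ℝ) + 1) - α) * F1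
      + 2 * (-1 : ℝ) ^ k * (x + 1) ^ α) / ((((k : ℝ) + 3) + α) * ((k : ℝ) + 1)) := by
    rw [eq_div_iff (mul_ne_zero hd1 hk1)]
    linear_combination hC
  rw [Real.Gamma_add_one hαne]
  have hjm : (k + 2) - 1 = k + 1 := rfl
  rw [hjm]
  have hp2 : (-1 : ℝ) ^ (k + 2) = (-1 : ℝ) ^ k := by rw [pow_add]; ring
  rw [hp2]
  show (1 / Real.Gamma α) * F3 = _
  rw [hC0]
  push_cast
  have hden2 : ((k : ℝ) + 2 + 1 + α) ≠ 0 := by positivity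
  have hden3 : ((k : ℝ) + 2 - 1) ≠ 0 := by
    have h' : ((k : ℝ) + 2 - 1) = (k : ℝ) + 1 := by ring
    rw [h']; positivity
  field_simp
  ring
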